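/- Let W = {y ∈ ℝⁿ : y₁ = ⋯ = yₜ = 0} for 1 ≤ t < n, and let F ⊆ ℝⁿ be a compact set such that the t-dimensional Hausdorff measure restricted to F is σ-finite. Then for Hᵗ-almost every y ∈ ℝᵗ (identifying ℝᵗ with W^⊥), the intersection F ∩ (W + y) is at most countable. -/

import Mathlib

open Set Metric Filter MeasureTheory TopologicalSpace

noncomputable def coveringNumber {X : Type*} [MetricSpace X] (δ : ℝ) (F : Set X) : ℕ∞ :=
  sInf {m : ℕ∞ | ∃ C : Finset (Set X), (C.card : ℕ∞) = m ∧
    (∀ U ∈ C, IsOpen U ∧ Metric.diam U ≤ δ) ∧ F ⊆ ⋃ U ∈ C, U}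

noncomputable def packingNumber {X : Type*} [MetricSpace X] (δ : ℝ) (F : Set X) : ℕ∞ :=
  sSup {m : ℕ∞ | ∃ S : Finset X, (S.card : ℕ∞) = m ∧ (↑S : Set X) ⊆ F ∧
    (S : Set X).Pairwise fun x y => Disjoint (Metric.closedBall x δ) (Metric.closedBall y δ)}

noncomputable def upperBoxDim {X : Type*} [MetricSpace X] (F : Set X) : ℝ :=
  Filter.limsup (fun δ : ℝ => Real.log ((coveringNumber δ F).toNat) / (-Real.log δ))
    (nhdsWithin 0 (Set.Ioi 0))

noncomputable def lowerBoxDim {X : Type*} [MetricSpace X] (F : Set X) : ℝ :=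
  Filter.liminf (fun δ : ℝ => Real.log ((coveringNumber δ F).toNat) / (-Real.log δ))
    (nhdsWithin 0 (Set.Ioi 0))

noncomputable def packingDim {X : Type*} [MetricSpace X] (F : Set X) : ℝ :=
  sInf {s : ℝ | ∃ E : ℕ → Set X, F ⊆ ⋃ i, E i ∧ ∀ i, upperBoxDim (E i) ≤ s}

noncomputable def covDim (Y : Type*) [TopologicalSpace Y] : ℕ∞ :=
  sInf {m : ℕ∞ | ∀ (ι : Type) (U : ι → Set Y), (∀ i, IsOpen (U i)) → (⋃ i, U i) = Set.univ →
    ∃ (κ : Type) (V : κ → Set Y), (∀ j, IsOpen (V j)) ∧ (⋃ j, V j) = Set.univ ∧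
      (∀ j, ∃ i, V j ⊆ U i) ∧ ∀ y : Y, ENat.card {j : κ // y ∈ V j} ≤ m + 1}

open ENNReal NNReal

-- separation lemma
lemma aux_sep {X : Type*} [EMetricSpace X] [DecidableEq X] (S : Finset X) :
    ∃ ρ : ℝ≥0∞, 0 < ρ ∧ ∀ x ∈ S, ∀ x' ∈ S, x ≠ x' → ρ ≤ edist x x' := by
  rcases S.offDiag.eq_empty_or_nonempty with h | h
  · exact ⟨1, one_pos, fun x hx x' hx' hne =>
      absurd ((Finset.mem_offDiag (x := (x, x'))).2 ⟨hx, hx', hne⟩) (by simp [h])⟩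
  · refine ⟨S.offDiag.inf' h (fun p => edist p.1 p.2), ?_, ?_⟩
    · rw [Finset.lt_inf'_iff]
      intro p hp
      exact edist_pos.2 (Finset.mem_offDiag.1 hp).2.2
    · intro x hx x' hx' hne
      exact Finset.inf'_le _ ((Finset.mem_offDiag (x := (x, x'))).2 ⟨hx, hx', hne⟩)

-- projection is 1-Lipschitz
lemma aux_lip {n t : ℕ} (htn : t ≤ n) :
    LipschitzWith 1 (fun (x : Fin n → ℝ) (j : Fin t) => x (Fin.castLE htn j)) := by
  intro x x'
  rw [ENNReal.coe_one, one_mul, edist_pi_def, edist_pi_def]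
  exact Finset.sup_le fun j _ => Finset.le_sup_of_le (Finset.mem_univ _) le_rfl

lemma aux_slice_finite {n t : ℕ} (htn : t ≤ n) (F A : Set (Fin n → ℝ)) (hF : IsCompact F)
    (hAF : A ⊆ F) (hfin : μH[(t : ℝ)] A ≠ ∞) :
    ∀ᵐ y ∂(volume : Measure (Fin t → ℝ)),
      (A ∩ (fun (x : Fin n → ℝ) (j : Fin t) => x (Fin.castLE htn j)) ⁻¹' {y}).Finite := by
  classical
  set π : (Fin n → ℝ) → (Fin t → ℝ) := fun x j => x (Fin.castLE htn j) with hπ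
  have hπc : Continuous π := continuous_pi fun j => continuous_apply _
  -- obtain good covers at scale (k+1)⁻¹
  have hcov : ∀ k : ℕ, ∃ E : ℕ → Set (Fin n → ℝ), (A ⊆ ⋃ j, E j) ∧
      (∀ j, EMetric.diam (E j) ≤ ((k : ℝ≥0∞) + 1)⁻¹) ∧
      (∑' j, ⨆ _ : (E j).Nonempty, EMetric.diam (E j) ^ (t : ℝ)) ≤ μH[(t : ℝ)] A + 1 := by
    intro k
    have h0 : (0 : ℝ≥0∞) < ((k : ℝ≥0∞) + 1)⁻¹ := by
      rw [ENNReal.inv_pos]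
      exact ENNReal.add_ne_top.2 ⟨ENNReal.natCast_ne_top k, one_ne_top⟩
    have h1 : (⨅ (E : ℕ → Set (Fin n → ℝ)) (_ : A ⊆ ⋃ j, E j)
        (_ : ∀ j, EMetric.diam (E j) ≤ ((k : ℝ≥0∞) + 1)⁻¹),
        ∑' j, ⨆ _ : (E j).Nonempty, EMetric.diam (E j) ^ (t : ℝ)) ≤ μH[(t : ℝ)] A := by
      rw [MeasureTheory.Measure.hausdorffMeasure_apply]
      exact le_iSup₂_of_le (((k : ℝ≥0∞) + 1)⁻¹) h0 le_rfl
    have h2 : (⨅ (E : ℕ → Set (Fin n → ℝ)) (_ : A ⊆ ⋃ j, E j)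
        (_ : ∀ j, EMetric.diam (E j) ≤ ((k : ℝ≥0∞) + 1)⁻¹),
        ∑' j, ⨆ _ : (E j).Nonempty, EMetric.diam (E j) ^ (t : ℝ)) < μH[(t : ℝ)] A + 1 :=
      lt_of_le_of_lt h1 (ENNReal.lt_add_right hfin one_ne_zero)
    obtain ⟨E, hE⟩ := iInf_lt_iff.1 h2
    obtain ⟨hE1, hE⟩ := iInf_lt_iff.1 hE
    obtain ⟨hE2, hE⟩ := iInf_lt_iff.1 hE
    exact ⟨E, hE1, hE2, hE.le⟩
  choose E hEcov hEdiam hEsum using hcov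
  set K : ℕ → ℕ → Set (Fin t → ℝ) := fun k j => π '' (closure (E k j) ∩ F) with hK
  have hKcomp : ∀ k j, IsCompact (K k j) := fun k j =>
    ((hF.inter_left isClosed_closure).image hπc)
  have hKmeas : ∀ k j, MeasurableSet (K k j) := fun k j => (hKcomp k j).isClosed.measurableSet
  set g : ℕ → (Fin t → ℝ) → ℝ≥0∞ :=
    fun k y => ∑' j, (K k j).indicator (1 : (Fin t → ℝ) → ℝ≥0∞) y with hg
  have hgmeas : ∀ k, Measurable (g k) :=
    fun k => Measurable.ennreal_tsum fun j => measurable_one.indicator (hKmeas k j)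
  -- integral bound
  have hint : ∀ k, ∫⁻ y, g k y ≤ μH[(t : ℝ)] A + 1 := by
    intro k
    show ∫⁻ y, ∑' j, (K k j).indicator (1 : (Fin t → ℝ) → ℝ≥0∞) y ≤ μH[(t : ℝ)] A + 1
    rw [MeasureTheory.lintegral_tsum fun j => (measurable_one.indicator (hKmeas k j)).aemeasurable]
    refine le_trans (ENNReal.tsum_le_tsum fun j => ?_) (hEsum k)
    rw [MeasureTheory.lintegral_indicator_one (hKmeas k j)]
    rcases (E k j).eq_empty_or_nonempty with h | h
    · have : K k j = ∅ := by simp [hK, h]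
      simp [this]
    · rw [iSup_pos h]
      calc volume (K k j) ≤ EMetric.diam (K k j) ^ Fintype.card (Fin t) :=
            Real.volume_pi_le_diam_pow _
        _ = EMetric.diam (K k j) ^ (t : ℝ) := by
            rw [Fintype.card_fin, ← ENNReal.rpow_natCast]
        _ ≤ EMetric.diam (E k j) ^ (t : ℝ) := by
            apply ENNReal.rpow_le_rpow _ (Nat.cast_nonneg t)
            calc EMetric.diam (K k j) ≤ 1 * EMetric.diam (closure (E k j) ∩ F) := by
                  have h := (aux_lip htn).ediam_image_le (closure (E k j) ∩ F); rw [ENNReal.coe_one] at h; exact h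
              _ ≤ EMetric.diam (closure (E k j)) := by
                  rw [one_mul]; exact EMetric.diam_mono inter_subset_left
              _ = EMetric.diam (E k j) := EMetric.diam_closure _
  -- Fatou
  set G : (Fin t → ℝ) → ℝ≥0∞ := fun y => liminf (fun k => g k y) atTop with hG
  have hGmeas : Measurable G := Measurable.liminf hgmeas
  have hGint : ∫⁻ y, G y ≠ ∞ := by
    apply ne_of_lt
    calc ∫⁻ y, G y ≤ liminf (fun k => ∫⁻ y, g k y) atTop := lintegral_liminf_le hgmeas
      _ ≤ μH[(t : ℝ)] A + 1 :=
        liminf_le_of_frequently_le' (Frequently.of_forall fun k => hint k)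
      _ < ∞ := (ENNReal.add_ne_top.2 ⟨hfin, one_ne_top⟩).lt_top
  have hae := MeasureTheory.ae_lt_top hGmeas hGint
  filter_upwards [hae] with y hy
  by_contra hinf
  replace hinf : (A ∩ π ⁻¹' {y}).Infinite := hinf
  have htop : G y = ∞ := by
    apply ENNReal.eq_top_of_forall_nnreal_le
    intro r
    have hM : ∀ M : ℕ, (M : ℝ≥0∞) ≤ G y := by
      intro M
      obtain ⟨S, hS_sub, hScard⟩ := hinf.exists_subset_card_eq M
      obtain ⟨ρ, hρ0, hρ⟩ := aux_sep S
      obtain ⟨k₀, hk₀⟩ := ENNReal.exists_inv_nat_lt hρ0.ne'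
      refine le_liminf_of_le (by isBoundedDefault) ?_
      filter_upwards [eventually_ge_atTop k₀] with k hk
      have hxE : ∀ x : {x // x ∈ S}, ∃ j, (x : Fin n → ℝ) ∈ E k j := fun x =>
        mem_iUnion.1 (hEcov k (hS_sub x.2).1)
      choose jf hjf using hxE
      have hinj : Function.Injective jf := by
        intro x x' hxx'
        by_contra hne
        have hcne : (x : Fin n → ℝ) ≠ (x' : Fin n → ℝ) := Subtype.coe_ne_coe.2 hne
        have h1 : edist (x : Fin n → ℝ) (x' : Fin n → ℝ) ≤ ((k : ℝ≥0∞) + 1)⁻¹ :=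
          le_trans (EMetric.edist_le_diam_of_mem (hjf x) (hxx' ▸ hjf x')) (hEdiam k _)
        have h2 : ρ ≤ edist (x : Fin n → ℝ) (x' : Fin n → ℝ) := hρ _ x.2 _ x'.2 hcne
        have h3 : ((k : ℝ≥0∞) + 1)⁻¹ < ρ := by
          refine lt_of_le_of_lt ?_ hk₀
          apply ENNReal.inv_le_inv'
          exact_mod_cast le_trans (Nat.cast_le.2 hk) (le_add_of_nonneg_right zero_le_one)
        exact absurd (h2.trans h1) (not_le.2 h3)
      set T := Finset.image jf Finset.univ with hT
      have hcardT : T.card = M := by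
        rw [hT, Finset.card_image_of_injective _ hinj, Finset.card_univ, Fintype.card_coe,
          hScard]
      have hind : ∀ j ∈ T, (K k j).indicator (1 : (Fin t → ℝ) → ℝ≥0∞) y = 1 := by
        intro j hj
        obtain ⟨x, -, rfl⟩ := Finset.mem_image.1 hj
        have hx' := hS_sub x.2
        have hxK : y ∈ K k (jf x) := by
          refine ⟨(x : Fin n → ℝ), ⟨subset_closure (hjf x), hAF hx'.1⟩, ?_⟩
          have := hx'.2
          simpa [hπ] using this
        simp [Set.indicator_of_mem hxK]
      calc (M : ℝ≥0∞) = ∑ j ∈ T, (K k j).indicator (1 : (Fin t → ℝ) → ℝ≥0∞) y := by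
            rw [Finset.sum_congr rfl hind, Finset.sum_const, hcardT]; simp
        _ ≤ g k y := ENNReal.sum_le_tsum T
    calc (r : ℝ≥0∞) ≤ ((⌈r⌉₊ : ℕ) : ℝ≥0∞) := by exact_mod_cast Nat.le_ceil r
      _ ≤ G y := hM _
  exact absurd htop hy.ne

theorem stmt18 (n t : ℕ) (ht : 1 ≤ t) (htn : t < n)
    (F : Set (Fin n → ℝ)) (hF : IsCompact F)
    (hsf : MeasureTheory.SigmaFinite
      ((μH[(t : ℝ)] : MeasureTheory.Measure (Fin n → ℝ)).restrict F)) :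
    ∀ᵐ y ∂(μH[(t : ℝ)] : MeasureTheory.Measure (Fin t → ℝ)),
      (F ∩ ((fun w => w + fun i : Fin n => if h : (i : ℕ) < t then y ⟨i, h⟩ else 0) ''
        {w : Fin n → ℝ | ∀ i : Fin n, (i : ℕ) < t → w i = 0})).Countable := by
  classical
  have hmeq : (μH[(t : ℝ)] : Measure (Fin t → ℝ)) = volume := by
    have h := MeasureTheory.hausdorffMeasure_pi_real (ι := Fin t)
    simpa [Fintype.card_fin] using h
  rw [hmeq]
  set π : (Fin n → ℝ) → (Fin t → ℝ) := fun x j => x (Fin.castLE htn.le j) with hπ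
  have hslice : ∀ y : Fin t → ℝ,
      (F ∩ ((fun w => w + fun i : Fin n => if h : (i : ℕ) < t then y ⟨i, h⟩ else 0) ''
        {w : Fin n → ℝ | ∀ i : Fin n, (i : ℕ) < t → w i = 0})) = F ∩ π ⁻¹' {y} := by
    intro y
    ext x
    simp only [Set.mem_inter_iff, Set.mem_image, Set.mem_preimage, Set.mem_singleton_iff,
      Set.mem_setOf_eq]
    refine and_congr_right fun hxF => ⟨?_, ?_⟩
    · rintro ⟨w, hw, rfl⟩
      funext j
      have hj : ((Fin.castLE htn.le j : Fin n) : ℕ) < t := by simpa using j.2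
      simp only [hπ, Pi.add_apply, dif_pos hj, hw _ hj, zero_add]
      exact congrArg y (Fin.ext (by simp))
    · intro hpre
      refine ⟨fun i => if h : (i : ℕ) < t then 0 else x i, fun i hi => dif_pos hi, ?_⟩
      funext i
      by_cases h : (i : ℕ) < t
      · simp only [Pi.add_apply, dif_pos h, zero_add]
        have hc := congrFun hpre ⟨(i : ℕ), h⟩
        simp only [hπ] at hc
        rw [← hc]
        exact congrArg x (Fin.ext rfl)
      · simp only [Pi.add_apply, dif_neg h, add_zero]
  simp only [hslice]
  set μ := (μH[(t : ℝ)] : Measure (Fin n → ℝ)) with hμ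
  have hFm : MeasurableSet F := hF.isClosed.measurableSet
  have hfin : ∀ k : ℕ, μH[(t : ℝ)] (MeasureTheory.spanningSets (μ.restrict F) k ∩ F) ≠ ∞ := by
    intro k
    rw [← Measure.restrict_apply (measurableSet_spanningSets _ k)]
    exact (measure_spanningSets_lt_top _ k).ne
  have hae : ∀ k : ℕ, ∀ᵐ y ∂(volume : Measure (Fin t → ℝ)),
      ((MeasureTheory.spanningSets (μ.restrict F) k ∩ F) ∩ π ⁻¹' {y}).Finite :=
    fun k => aux_slice_finite htn.le F _ hF inter_subset_right (hfin k)
  filter_upwards [ae_all_iff.2 hae] with y hy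
  have hU : F = ⋃ k, (MeasureTheory.spanningSets (μ.restrict F) k ∩ F) := by
    rw [← Set.iUnion_inter, MeasureTheory.iUnion_spanningSets, univ_inter]
  rw [hU, Set.iUnion_inter]
  exact countable_iUnion fun k => (hy k).countable
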